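/- Let (Q, f) be a triangulation quiver with at least three vertices such that g³ is the identity on Q₁. Then Q contains no loops, i.e., there is no arrow α with s(α) = t(α). (Step in the proof of Lemma 6.6, implication (iii) ⇒ (ii).) -/
import Mathlib


/-- A triangulation quiver: a finite connected 2-regular quiver `(V, A, s, t)` together
with a permutation `f` of the arrows satisfying `s (f a) = t a` and `f ∘ f ∘ f = id`.
The field `bar` records, for each arrow `a`, the unique arrow `ᾱ ≠ α` with the same
source (it exists and is unique by 2-regularity), together with its defining properties. -/
structure TriangulationQuiver where
  V : Type
  A : Type
  fintypeV : Fintype V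
  fintypeA : Fintype A
  s : A → V
  t : A → V
  two_regular_src : ∀ v : V, Set.ncard {a : A | s a = v} = 2
  two_regular_tgt : ∀ v : V, Set.ncard {a : A | t a = v} = 2
  connected : ∀ u v : V,
    Relation.ReflTransGen (fun x y => ∃ a : A, (s a = x ∧ t a = y) ∨ (s a = y ∧ t a = x)) u v
  f : A → A
  f_cube : ∀ a : A, f (f (f a)) = a
  s_f : ∀ a : A, s (f a) = t a
  bar : A → A
  bar_src : ∀ a : A, s (bar a) = s a
  bar_ne : ∀ a : A, bar a ≠ a
  bar_unique : ∀ a b : A, s b = s a → b ≠ a → b = bar a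

attribute [instance] TriangulationQuiver.fintypeV TriangulationQuiver.fintypeA

namespace TriangulationQuiver

variable (Q : TriangulationQuiver)

/-- The second permutation of arrows: `g α = \overline{f α}`. -/
def g (a : Q.A) : Q.A := Q.bar (Q.f a)

/-- The `g`-orbit of an arrow. -/
def gOrbit (a : Q.A) : Set Q.A := {b : Q.A | ∃ k : ℕ, Q.g^[k] a = b}

/-- `n α` is the number of arrows in the `g`-orbit of `α`. -/
noncomputable def n (a : Q.A) : ℕ := (Q.gOrbit a).ncard

end TriangulationQuiver

namespace TriangulationQuiver

lemma fInj (Q : TriangulationQuiver) : Function.Injective Q.f := by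
  intro a b h
  have := congrArg (fun x => Q.f (Q.f x)) h
  simpa [Q.f_cube] using this

lemma bar_bar (Q : TriangulationQuiver) (a : Q.A) : Q.bar (Q.bar a) = a :=
  (Q.bar_unique (Q.bar a) a (Q.bar_src a).symm (Ne.symm (Q.bar_ne a))).symm

lemma barInj (Q : TriangulationQuiver) : Function.Injective Q.bar := by
  intro a b h
  have := congrArg Q.bar h
  rwa [Q.bar_bar, Q.bar_bar] at this

/-- Key lemma: a loop `a` with `f a = bar a` is impossible. -/
lemma no_loop_key (Q : TriangulationQuiver) (h3 : 3 ≤ Fintype.card Q.V)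
    (hg : ∀ a : Q.A, Q.g (Q.g (Q.g a)) = a)
    (a : Q.A) (ha : Q.s a = Q.t a) (hfa : Q.f a = Q.bar a) : False := by
  classical
  set b := Q.bar a with hb
  set c := Q.f b with hc
  set d := Q.bar c with hd
  set x := Q.s a with hx
  set y := Q.s c with hy
  have hba : b ≠ a := Q.bar_ne a
  have hsb : Q.s b = x := Q.bar_src a
  have hfc : Q.f c = a := by
    have := Q.f_cube a
    rwa [hfa, ← hc] at this
  have hta : Q.t a = x := ha.symm
  have htb : Q.t b = y := by rw [← Q.s_f b, ← hc]
  have htc : Q.t c = x := by rw [← Q.s_f c, hfc]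
  have hca : c ≠ a := by
    intro h
    rw [h] at hfc
    exact hba (hfa.symm.trans hfc)
  have hcb : c ≠ b := by
    intro h
    have hfb : Q.f b = b := by rw [← hc, h]
    exact hba (Q.fInj (hfa.trans hfb.symm)).symm
  have hyx : y ≠ x := by
    intro h
    have : c = Q.bar a := Q.bar_unique a c (by rw [← hy, ← hx]; exact h) hca
    exact hcb (this.trans hb.symm)
  have habbar : a = Q.bar b := Q.bar_unique b a hsb.symm (Ne.symm hba)
  have hfd : Q.f d = d := by
    have h1 : Q.g b = d := by rw [TriangulationQuiver.g, ← hc, ← hd]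
    have h2 := hg b
    rw [h1] at h2
    -- h2 : Q.g (Q.g d) = b
    have h3' : Q.bar (Q.f (Q.bar (Q.f d))) = b := by
      simpa [TriangulationQuiver.g] using h2
    have h4 : Q.f (Q.bar (Q.f d)) = Q.bar b := by
      rw [← Q.bar_bar (Q.f (Q.bar (Q.f d))), h3']
    rw [← habbar, ← hfc] at h4
    have h5 : Q.bar (Q.f d) = c := Q.fInj h4
    have := congrArg Q.bar h5
    rwa [Q.bar_bar, ← hd] at this
  have hsd : Q.s d = y := Q.bar_src c
  have htd : Q.t d = y := by rw [← Q.s_f d, hfd, hsd]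
  have hdc : d ≠ c := Q.bar_ne c
  have hbd : b ≠ d := by
    intro h
    rw [h, hsd] at hsb
    exact hyx hsb
  -- source classification
  have hSx : ∀ e : Q.A, Q.s e = x → e = a ∨ e = b := by
    intro e he
    by_cases h : e = a
    · exact Or.inl h
    · exact Or.inr (Q.bar_unique a e he h)
  have hSy : ∀ e : Q.A, Q.s e = y → e = c ∨ e = d := by
    intro e he
    by_cases h : e = c
    · exact Or.inl h
    · exact Or.inr (Q.bar_unique c e he h)
  -- target classification
  have hTgen : ∀ (v : Q.V) (p q : Q.A), Q.t p = v → Q.t q = v → p ≠ q →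
      ∀ e : Q.A, Q.t e = v → e = p ∨ e = q := by
    intro v p q hp hq hpq e he
    have h2 := Q.two_regular_tgt v
    rw [Set.ncard_eq_two] at h2
    obtain ⟨u, w, huw, hset⟩ := h2
    have hpm : p ∈ ({u, w} : Set Q.A) := hset ▸ hp
    have hqm : q ∈ ({u, w} : Set Q.A) := hset ▸ hq
    have hem : e ∈ ({u, w} : Set Q.A) := hset ▸ he
    simp only [Set.mem_insert_iff, Set.mem_singleton_iff] at hpm hqm hem
    rcases hpm with rfl | rfl <;> rcases hqm with rfl | rfl <;>
      rcases hem with rfl | rfl <;> tauto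
  have hTx := hTgen x a c hta htc (Ne.symm hca)
  have hTy := hTgen y b d htb htd hbd
  -- closure of {x, y} under steps
  have hstep : ∀ u v : Q.V,
      (∃ e : Q.A, (Q.s e = u ∧ Q.t e = v) ∨ (Q.s e = v ∧ Q.t e = u)) →
      (u = x ∨ u = y) → (v = x ∨ v = y) := by
    rintro u v ⟨e, ⟨hs, ht⟩ | ⟨hs, ht⟩⟩ hu
    · rcases hu with rfl | rfl
      · rcases hSx e hs with rfl | rfl
        · exact Or.inl (by rw [← ht, hta])
        · exact Or.inr (by rw [← ht, htb])
      · rcases hSy e hs with rfl | rfl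
        · exact Or.inl (by rw [← ht, htc])
        · exact Or.inr (by rw [← ht, htd])
    · rcases hu with rfl | rfl
      · rcases hTx e ht with rfl | rfl
        · exact Or.inl (by rw [← hs, ← hx])
        · exact Or.inr (by rw [← hs, ← hy])
      · rcases hTy e ht with rfl | rfl
        · exact Or.inl (by rw [← hs, hsb])
        · exact Or.inr (by rw [← hs, hsd])
  have hall : ∀ v : Q.V, v = x ∨ v = y := by
    intro v
    have hconn := Q.connected x v
    induction hconn with
    | refl => exact Or.inl rfl
    | tail _ hst ih => exact hstep _ _ hst ih
  have hsurj : Function.Surjective (fun t : Bool => if t then x else y) := by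
    intro v
    rcases hall v with rfl | rfl
    · exact ⟨true, rfl⟩
    · exact ⟨false, rfl⟩
  have := Fintype.card_le_of_surjective _ hsurj
  simp at this
  omega

end TriangulationQuiver

/-- Step in the proof of Lemma 6.6, (iii) ⇒ (ii): a triangulation quiver with at least
three vertices on which `g³` is the identity contains no loops. -/


theorem stmt_3 (Q : TriangulationQuiver) (h3 : 3 ≤ Fintype.card Q.V)
    (hg : ∀ a : Q.A, Q.g (Q.g (Q.g a)) = a) :
    ∀ a : Q.A, Q.s a ≠ Q.t a := by
  intro a ha
  classical
  by_cases hfa : Q.f a = a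
  · -- produce another loop c = f (bar a) with f c = bar c
    set b := Q.bar a with hb
    set c := Q.f b with hc
    have h1 : Q.g a = b := by
      rw [TriangulationQuiver.g, hfa, ← hb]
    have h2 := hg a
    rw [h1] at h2
    have hh3 : Q.bar (Q.f (Q.bar (Q.f b))) = a := by
      simpa [TriangulationQuiver.g] using h2
    have h4 : Q.f (Q.bar (Q.f b)) = Q.bar a := by
      rw [← Q.bar_bar (Q.f (Q.bar (Q.f b))), hh3]
    have h5 : Q.f (Q.bar c) = b := by
      rw [← hc] at h4; rw [h4, ← hb]
    have h6 : Q.f (Q.f c) = b := by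
      have := Q.f_cube b; rwa [← hc] at this
    have h7 : Q.f c = Q.bar c := Q.fInj (by rw [h6, ← h5])
    have hloop : Q.s c = Q.t c := by
      have := Q.s_f c
      rwa [h7, Q.bar_src] at this
    exact Q.no_loop_key h3 hg c hloop h7
  · have hfa' : Q.f a = Q.bar a := by
      apply Q.bar_unique a (Q.f a) _ hfa
      rw [Q.s_f, ← ha]
    exact Q.no_loop_key h3 hg a ha hfa'
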